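/- Let n ≥ 1 and let Γ : ℝ → M_{n+1}(ℝ) be a smooth map with Γ(t) ∈ SO(n+1) for all t ∈ [0,1] and Γ(0) = I. Then the following are equivalent: (a) there exists a smooth curve γ : ℝ → ℝ^{n+1}, positive locally convex on [0,1], with |γ(t)| = 1 for all t ∈ [0,1] and F_γ(t) = Γ(t) for all t ∈ [0,1]; (b) for every t ∈ [0,1] the matrix g(t) := Γ(t)ᵀ·Γ'(t) is tridiagonal with positive subdiagonal, i.e. g(t)_{i,j} = 0 whenever |i−j| > 1 and g(t)_{j+1,j} > 0 for all 1 ≤ j ≤ n. Moreover, when these hold, γ(t) = Γ(t)·e₁ on [0,1], and g(t) is skew-symmetric. -/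

import Mathlib

open Matrix
open scoped Classical

noncomputable section

def IsSignedPerm {m : ℕ} (Q : Matrix (Fin m) (Fin m) ℝ) : Prop :=
  (∀ i, ∃! j, Q i j ≠ 0) ∧ (∀ j, ∃! i, Q i j ≠ 0) ∧
    ∀ i j, Q i j ≠ 0 → Q i j = 1 ∨ Q i j = -1

def NE {m : ℕ} (Q : Matrix (Fin m) (Fin m) ℝ) (i j : Fin m) : ℕ :=
  (Finset.univ.filter fun p : Fin m × Fin m => p.1 < i ∧ j < p.2 ∧ Q p.1 p.2 ≠ 0).card

def SW {m : ℕ} (Q : Matrix (Fin m) (Fin m) ℝ) (i j : Fin m) : ℕ := NE Qᵀ j i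

def deltaRow {m : ℕ} (Q : Matrix (Fin m) (Fin m) ℝ) (i : Fin m) : ℝ :=
  ∑ j, Q i j * (-1 : ℝ) ^ NE Q i j

def DeltaM {m : ℕ} (Q : Matrix (Fin m) (Fin m) ℝ) : Matrix (Fin m) (Fin m) ℝ :=
  Matrix.diagonal (deltaRow Q)

def sFun {m : ℕ} (Q : Matrix (Fin m) (Fin m) ℝ) : ℝ := (DeltaM Q).trace

def Jplus (m : ℕ) : Matrix (Fin m) (Fin m) ℝ :=
  Matrix.diagonal fun i => (-1 : ℝ) ^ (i : ℕ)

def TR {m : ℕ} (Q : Matrix (Fin m) (Fin m) ℝ) : Matrix (Fin m) (Fin m) ℝ :=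
  Jplus m * Qᵀ * Jplus m

def Amat (m : ℕ) : Matrix (Fin m) (Fin m) ℝ :=
  Matrix.of fun i j => if (i : ℕ) + (j : ℕ) = m - 1 then (-1 : ℝ) ^ (i : ℕ) else 0

def AD {m : ℕ} (Q : Matrix (Fin m) (Fin m) ℝ) : Matrix (Fin m) (Fin m) ℝ :=
  (Amat m)ᵀ * Q * Amat m

def IsUpperPos {m : ℕ} (R : Matrix (Fin m) (Fin m) ℝ) : Prop :=
  (∀ i j, j < i → R i j = 0) ∧ ∀ i, 0 < R i i

def Wmat {m : ℕ} (γ : ℝ → Fin m → ℝ) (t : ℝ) : Matrix (Fin m) (Fin m) ℝ :=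
  Matrix.of fun i j => iteratedDeriv (j : ℕ) γ t i

def Wronskian {m : ℕ} (γ : ℝ → Fin m → ℝ) (t : ℝ) : ℝ := (Wmat γ t).det

def PosLocConv {m : ℕ} (γ : ℝ → Fin m → ℝ) : Prop :=
  ∀ t ∈ Set.Icc (0 : ℝ) 1, 0 < Wronskian γ t

def IsFrameAt {m : ℕ} (γ : ℝ → Fin m → ℝ) (t : ℝ) (F : Matrix (Fin m) (Fin m) ℝ) : Prop :=
  Fᵀ * F = 1 ∧ F.det = 1 ∧ ∃ R, IsUpperPos R ∧ Wmat γ t = F * R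

def IsFrenet {m : ℕ} (γ : ℝ → Fin m → ℝ) (F : ℝ → Matrix (Fin m) (Fin m) ℝ) : Prop :=
  ∀ t ∈ Set.Icc (0 : ℝ) 1, IsFrameAt γ t (F t)

def e1 {m : ℕ} : Fin m → ℝ := fun i => if (i : ℕ) = 0 then 1 else 0

def frobNorm {m : ℕ} (M : Matrix (Fin m) (Fin m) ℝ) : ℝ :=
  Real.sqrt (∑ i, ∑ j, (M i j) ^ 2)

def gMat {n : ℕ} (Γ : ℝ → Matrix (Fin n) (Fin n) ℝ) (t : ℝ) : Matrix (Fin n) (Fin n) ℝ :=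
  (Γ t)ᵀ * Matrix.of fun i j => deriv (fun u => Γ u i j) t

namespace S16
open Set


lemma contDiff_iteratedDeriv' {F : Type*} [NormedAddCommGroup F] [NormedSpace ℝ F]
    {f : ℝ → F} (hf : ContDiff ℝ (⊤:ℕ∞) f) (k : ℕ) :
    ContDiff ℝ (⊤:ℕ∞) (iteratedDeriv k f) := by
  rw [iteratedDeriv_eq_iterate]
  exact ContDiff.iterate_deriv k hf

lemma iteratedDeriv_apply' {m : ℕ} {γ : ℝ → Fin m → ℝ} (hγ : ContDiff ℝ (⊤:ℕ∞) γ) (k : ℕ)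
    (i : Fin m) : (fun t => iteratedDeriv k γ t i) = iteratedDeriv k (fun s => γ s i) := by
  induction k with
  | zero => simp [iteratedDeriv_zero]
  | succ k ih =>
    funext t
    have hd : DifferentiableAt ℝ (iteratedDeriv k γ) t :=
      ((contDiff_iteratedDeriv' hγ k).differentiable (by simp)).differentiableAt
    have h1 : HasDerivAt (fun u => iteratedDeriv k γ u i) (deriv (iteratedDeriv k γ) t i) t :=
      hasDerivAt_pi.1 hd.hasDerivAt i
    calc iteratedDeriv (k+1) γ t i = deriv (iteratedDeriv k γ) t i := by rw [iteratedDeriv_succ]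
    _ = deriv (fun u => iteratedDeriv k γ u i) t := h1.deriv.symm
    _ = deriv (iteratedDeriv k (fun s => γ s i)) t := by rw [ih]
    _ = iteratedDeriv (k+1) (fun s => γ s i) t := by rw [iteratedDeriv_succ]

lemma deriv_eq_zero_of_constOn {f : ℝ → ℝ} {c t : ℝ} (hf : DifferentiableAt ℝ f t)
    (ht : t ∈ Icc (0:ℝ) 1) (h0 : ∀ s ∈ Icc (0:ℝ) 1, f s = c) : deriv f t = 0 := by
  have h1 : derivWithin f (Icc (0:ℝ) 1) t = deriv f t :=
    hf.hasDerivAt.hasDerivWithinAt.derivWithin (uniqueDiffOn_Icc_zero_one t ht)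
  rw [← h1, derivWithin_congr h0 (h0 t ht),
    derivWithin_fun_const, Pi.zero_apply]



variable {m : ℕ} {Γ : ℝ → Matrix (Fin m) (Fin m) ℝ} {γ : ℝ → Fin m → ℝ}

lemma gMat_apply (Γ : ℝ → Matrix (Fin m) (Fin m) ℝ) (t : ℝ) (i l : Fin m) :
    gMat Γ t i l = ∑ j, Γ t j i * deriv (fun u => Γ u j l) t := by
  simp [gMat, Matrix.mul_apply, Matrix.transpose_apply]

lemma skew (hΓ : ∀ i j : Fin m, ContDiff ℝ (⊤:ℕ∞) fun t => Γ t i j)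
    (hSO : ∀ t ∈ Icc (0:ℝ) 1, (Γ t)ᵀ * Γ t = 1)
    {t : ℝ} (ht : t ∈ Icc (0:ℝ) 1) (i l : Fin m) :
    gMat Γ t l i + gMat Γ t i l = 0 := by
  have hD : ∀ a b : Fin m, DifferentiableAt ℝ (fun u => Γ u a b) t := fun a b =>
    ((hΓ a b).differentiable (by simp)).differentiableAt
  have hf : HasDerivAt (fun u => ∑ j, Γ u j i * Γ u j l)
      (∑ j, (deriv (fun u => Γ u j i) t * Γ t j l + Γ t j i * deriv (fun u => Γ u j l) t)) t :=
    HasDerivAt.fun_sum fun j _ => ((hD j i).hasDerivAt.mul (hD j l).hasDerivAt)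
  have h0 : (∑ j, (deriv (fun u => Γ u j i) t * Γ t j l
      + Γ t j i * deriv (fun u => Γ u j l) t)) = 0 := by
    rw [← hf.deriv]
    refine deriv_eq_zero_of_constOn hf.differentiableAt ht (c := (1 : Matrix (Fin m) (Fin m) ℝ) i l)
      fun s hs => ?_
    have h := hSO s hs
    calc ∑ j, Γ s j i * Γ s j l = ((Γ s)ᵀ * Γ s) i l := by
          simp [Matrix.mul_apply, Matrix.transpose_apply]
    _ = (1 : Matrix (Fin m) (Fin m) ℝ) i l := by rw [h]
  rw [← h0, gMat_apply, gMat_apply, ← Finset.sum_add_distrib]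
  exact Finset.sum_congr rfl fun j _ => by ring

def vv (Γ : ℝ → Matrix (Fin m) (Fin m) ℝ) (γ : ℝ → Fin m → ℝ) (k : ℕ) (t : ℝ) (i : Fin m) :
    ℝ := ∑ j, Γ t j i * iteratedDeriv k (fun s => γ s j) t

lemma contDiff_vv (hΓ : ∀ i j : Fin m, ContDiff ℝ (⊤:ℕ∞) fun t => Γ t i j)
    (hγ : ContDiff ℝ (⊤:ℕ∞) γ) (k : ℕ) (i : Fin m) :
    ContDiff ℝ (⊤:ℕ∞) (fun t => vv Γ γ k t i) :=
  ContDiff.sum fun j _ => (hΓ j i).mul (contDiff_iteratedDeriv' (contDiff_pi.1 hγ j) k)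

lemma sum_mul_vv {t : ℝ} (hO : Γ t * (Γ t)ᵀ = 1) (k : ℕ) (j : Fin m) :
    ∑ l, Γ t j l * vv Γ γ k t l = iteratedDeriv k (fun s => γ s j) t := by
  simp only [vv, Finset.mul_sum]
  rw [Finset.sum_comm]
  have key : ∀ p : Fin m, ∑ l, Γ t j l * (Γ t p l * iteratedDeriv k (fun s => γ s p) t)
      = (if j = p then 1 else 0) * iteratedDeriv k (fun s => γ s p) t := by
    intro p
    have h1 : ∑ l, Γ t j l * (Γ t p l * iteratedDeriv k (fun s => γ s p) t)
        = (∑ l, Γ t j l * Γ t p l) * iteratedDeriv k (fun s => γ s p) t := by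
      rw [Finset.sum_mul]; exact Finset.sum_congr rfl fun l _ => by ring
    rw [h1]
    congr 1
    have := congrFun (congrFun hO j) p
    simpa [Matrix.mul_apply, Matrix.transpose_apply, Matrix.one_apply] using this
  rw [Finset.sum_congr rfl fun p _ => key p]
  simp

lemma vv_succ (hΓ : ∀ i j : Fin m, ContDiff ℝ (⊤:ℕ∞) fun t => Γ t i j)
    (hγ : ContDiff ℝ (⊤:ℕ∞) γ)
    (hSO : ∀ t ∈ Icc (0:ℝ) 1, (Γ t)ᵀ * Γ t = 1)
    {t : ℝ} (ht : t ∈ Icc (0:ℝ) 1) (k : ℕ) (i : Fin m) :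
    vv Γ γ (k+1) t i
      = deriv (fun u => vv Γ γ k u i) t + ∑ l, gMat Γ t i l * vv Γ γ k t l := by
  have hγj : ∀ j : Fin m, ContDiff ℝ (⊤:ℕ∞) fun s => γ s j := contDiff_pi.1 hγ
  have hO : Γ t * (Γ t)ᵀ = 1 := mul_eq_one_comm.mp (hSO t ht)
  have hw : ∀ j : Fin m, HasDerivAt (fun s => iteratedDeriv k (fun u => γ u j) s)
      (iteratedDeriv (k+1) (fun u => γ u j) t) t := by
    intro j
    have hd := (((contDiff_iteratedDeriv' (hγj j) k).differentiable
      (by simp)) t).hasDerivAt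
    rw [iteratedDeriv_succ]
    exact hd
  have hD : ∀ a b : Fin m, HasDerivAt (fun u => Γ u a b) (deriv (fun u => Γ u a b) t) t :=
    fun a b => (((hΓ a b).differentiable (by simp)) t).hasDerivAt
  have hder : HasDerivAt (fun u => vv Γ γ k u i)
      (∑ j, (deriv (fun u => Γ u j i) t * iteratedDeriv k (fun s => γ s j) t
            + Γ t j i * iteratedDeriv (k+1) (fun s => γ s j) t)) t :=
    HasDerivAt.fun_sum fun j _ => (hD j i).mul (hw j)
  rw [hder.deriv]
  have hsplit : ∑ j, (deriv (fun u => Γ u j i) t * iteratedDeriv k (fun s => γ s j) t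
            + Γ t j i * iteratedDeriv (k+1) (fun s => γ s j) t)
      = (∑ j, deriv (fun u => Γ u j i) t * iteratedDeriv k (fun s => γ s j) t)
        + vv Γ γ (k+1) t i := by
    rw [Finset.sum_add_distrib]; rfl
  rw [hsplit]
  have hmain : ∑ l, gMat Γ t i l * vv Γ γ k t l
      = - ∑ j, deriv (fun u => Γ u j i) t * iteratedDeriv k (fun s => γ s j) t := by
    have hskew : ∀ l, gMat Γ t i l = - gMat Γ t l i := fun l => by
      have := skew hΓ hSO ht l i; linarith
    calc ∑ l, gMat Γ t i l * vv Γ γ k t l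
        = ∑ l, (- gMat Γ t l i) * vv Γ γ k t l :=
          Finset.sum_congr rfl fun l _ => by rw [hskew l]
    _ = - ∑ l, (∑ j, Γ t j l * deriv (fun u => Γ u j i) t) * vv Γ γ k t l := by
          rw [← Finset.sum_neg_distrib]
          exact Finset.sum_congr rfl fun l _ => by rw [gMat_apply]; ring
    _ = - ∑ j, deriv (fun u => Γ u j i) t * ∑ l, Γ t j l * vv Γ γ k t l := by
          congr 1
          calc ∑ l, (∑ j, Γ t j l * deriv (fun u => Γ u j i) t) * vv Γ γ k t l
              = ∑ l, ∑ j, deriv (fun u => Γ u j i) t * (Γ t j l * vv Γ γ k t l) := by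
                refine Finset.sum_congr rfl fun l _ => ?_
                rw [Finset.sum_mul]
                exact Finset.sum_congr rfl fun j _ => by ring
          _ = ∑ j, ∑ l, deriv (fun u => Γ u j i) t * (Γ t j l * vv Γ γ k t l) :=
                Finset.sum_comm
          _ = ∑ j, deriv (fun u => Γ u j i) t * ∑ l, Γ t j l * vv Γ γ k t l :=
                Finset.sum_congr rfl fun j _ => by rw [Finset.mul_sum]
    _ = - ∑ j, deriv (fun u => Γ u j i) t * iteratedDeriv k (fun s => γ s j) t := by
          congr 1
          exact Finset.sum_congr rfl fun j _ => by rw [sum_mul_vv hO]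
  rw [hmain]; ring

end S16

theorem stmt16 (n : ℕ) (hn : 1 ≤ n) (Γ : ℝ → Matrix (Fin (n+1)) (Fin (n+1)) ℝ)
    (hΓ : ∀ i j : Fin (n+1), ContDiff ℝ (⊤ : ℕ∞) fun t => Γ t i j)
    (hSO : ∀ t ∈ Set.Icc (0:ℝ) 1, (Γ t)ᵀ * Γ t = 1 ∧ (Γ t).det = 1)
    (hΓ0 : Γ 0 = 1) :
    ((∃ γ : ℝ → Fin (n+1) → ℝ, ContDiff ℝ (⊤ : ℕ∞) γ ∧ PosLocConv γ ∧
        (∀ t ∈ Set.Icc (0:ℝ) 1, ∑ i, (γ t i) ^ 2 = 1) ∧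
        ∀ t ∈ Set.Icc (0:ℝ) 1, IsFrameAt γ t (Γ t)) ↔
      (∀ t ∈ Set.Icc (0:ℝ) 1,
        (∀ i j : Fin (n+1), 1 < ((i : ℤ) - (j : ℤ)).natAbs → gMat Γ t i j = 0) ∧
        ∀ i j : Fin (n+1), (i : ℕ) = (j : ℕ) + 1 → 0 < gMat Γ t i j)) ∧
    (∀ γ : ℝ → Fin (n+1) → ℝ, ContDiff ℝ (⊤ : ℕ∞) γ → PosLocConv γ →
      (∀ t ∈ Set.Icc (0:ℝ) 1, ∑ i, (γ t i) ^ 2 = 1) →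
      (∀ t ∈ Set.Icc (0:ℝ) 1, IsFrameAt γ t (Γ t)) →
      ∀ t ∈ Set.Icc (0:ℝ) 1, γ t = (Γ t).mulVec e1) ∧
    ((∀ t ∈ Set.Icc (0:ℝ) 1,
        (∀ i j : Fin (n+1), 1 < ((i : ℤ) - (j : ℤ)).natAbs → gMat Γ t i j = 0) ∧
        ∀ i j : Fin (n+1), (i : ℕ) = (j : ℕ) + 1 → 0 < gMat Γ t i j) →
      ∀ t ∈ Set.Icc (0:ℝ) 1, (gMat Γ t)ᵀ = -(gMat Γ t)) := by

  have hO : ∀ t ∈ Set.Icc (0:ℝ) 1, (Γ t)ᵀ * Γ t = 1 := fun t ht => (hSO t ht).1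
  have hnorm1 : ∀ t ∈ Set.Icc (0:ℝ) 1, ∑ i, Γ t i 0 * Γ t i 0 = 1 := by
    intro t ht
    have := congrFun (congrFun (hO t ht) 0) 0
    simpa [Matrix.mul_apply, Matrix.transpose_apply, Matrix.one_apply] using this
  refine ⟨⟨?_, ?_⟩, ?_, ?_⟩
  · -- forward direction of the iff
    rintro ⟨γ, hγs, hplc, hnorm, hfr⟩ t ht
    have P : ∀ s ∈ Set.Icc (0:ℝ) 1, ∀ k : Fin (n+1),
        (∀ i : Fin (n+1), (k:ℕ) < (i:ℕ) → S16.vv Γ γ (k:ℕ) s i = 0)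
          ∧ 0 < S16.vv Γ γ (k:ℕ) s k := by
      intro s hs k
      obtain ⟨ho, hdet, R, ⟨hRz, hRd⟩, hW⟩ := hfr s hs
      have hvvR : ∀ i, S16.vv Γ γ (k:ℕ) s i = R i k := by
        intro i
        have h1 : S16.vv Γ γ (k:ℕ) s i = ((Γ s)ᵀ * Wmat γ s) i k := by
          simp only [S16.vv, Matrix.mul_apply, Matrix.transpose_apply, Wmat, Matrix.of_apply]
          refine Finset.sum_congr rfl fun j _ => ?_
          rw [← congrFun (S16.iteratedDeriv_apply' hγs (k:ℕ) j) s]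
        rw [h1, hW, ← Matrix.mul_assoc, ho, Matrix.one_mul]
      exact ⟨fun i hi => by rw [hvvR i]; exact hRz i k hi,
        by rw [hvvR k]; exact hRd k⟩
    have hzero : ∀ K : ℕ, ∀ i k : Fin (n+1), (k:ℕ) = K →
        (k:ℕ)+1 < (i:ℕ) → gMat Γ t i k = 0 := by
      intro K
      induction K using Nat.strong_induction_on with
      | _ K IH =>
        intro i k hkK hik
        subst hkK
        have hk1 : (k:ℕ)+1 < n+1 := by have := i.isLt; omega
        have hrec := S16.vv_succ hΓ hγs hO ht (k:ℕ) i
        have h1 : S16.vv Γ γ ((k:ℕ)+1) t i = 0 :=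
          (P t ht ⟨(k:ℕ)+1, hk1⟩).1 i hik
        have h2 : deriv (fun u => S16.vv Γ γ (k:ℕ) u i) t = 0 :=
          S16.deriv_eq_zero_of_constOn (c := 0)
            (((S16.contDiff_vv hΓ hγs (k:ℕ) i).differentiable
              (by simp)).differentiableAt) ht
            (fun s hs => (P s hs k).1 i (by omega))
        have h3 : ∑ l, gMat Γ t i l * S16.vv Γ γ (k:ℕ) t l
            = gMat Γ t i k * S16.vv Γ γ (k:ℕ) t k := by
          refine Finset.sum_eq_single_of_mem k (Finset.mem_univ k) fun l _ hlk => ?_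
          have hlk' : (l:ℕ) ≠ (k:ℕ) := fun h => hlk (Fin.ext h)
          rcases lt_or_gt_of_ne hlk' with h | h
          · rw [IH (l:ℕ) (by omega) i l rfl (by omega), zero_mul]
          · rw [(P t ht k).1 l h, mul_zero]
        have hpos := (P t ht k).2
        rw [h1, h2, h3, zero_add] at hrec
        rcases mul_eq_zero.mp hrec.symm with h | h
        · exact h
        · exact absurd h (ne_of_gt hpos)
    have hgpos : ∀ i k : Fin (n+1), (i:ℕ) = (k:ℕ)+1 → 0 < gMat Γ t i k := by
      intro i k hik
      have hrec := S16.vv_succ hΓ hγs hO ht (k:ℕ) i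
      have h1 : 0 < S16.vv Γ γ ((k:ℕ)+1) t i := by
        have := (P t ht i).2
        rwa [hik] at this
      have h2 : deriv (fun u => S16.vv Γ γ (k:ℕ) u i) t = 0 :=
        S16.deriv_eq_zero_of_constOn (c := 0)
          (((S16.contDiff_vv hΓ hγs (k:ℕ) i).differentiable
            (by simp)).differentiableAt) ht
          (fun s hs => (P s hs k).1 i (by omega))
      have h3 : ∑ l, gMat Γ t i l * S16.vv Γ γ (k:ℕ) t l
          = gMat Γ t i k * S16.vv Γ γ (k:ℕ) t k := by
        refine Finset.sum_eq_single_of_mem k (Finset.mem_univ k) fun l _ hlk => ?_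
        have hlk' : (l:ℕ) ≠ (k:ℕ) := fun h => hlk (Fin.ext h)
        rcases lt_or_gt_of_ne hlk' with h | h
        · rw [hzero (l:ℕ) i l rfl (by omega), zero_mul]
        · rw [(P t ht k).1 l h, mul_zero]
      have hpos := (P t ht k).2
      rw [h2, h3, zero_add] at hrec
      rw [hrec] at h1
      rcases mul_pos_iff.mp h1 with ⟨hg, _⟩ | ⟨_, hv⟩
      · exact hg
      · linarith
    refine ⟨fun i j hij => ?_, fun i j hij => hgpos i j hij⟩
    rcases lt_or_gt_of_ne (show (i:ℕ) ≠ (j:ℕ) by omega) with h | h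
    · have h0 : gMat Γ t j i = 0 := hzero (i:ℕ) j i rfl (by omega)
      linarith [S16.skew hΓ hO ht j i, S16.skew hΓ hO ht i j]
    · exact hzero (j:ℕ) i j rfl (by omega)
  · -- backward direction of the iff
    intro hg
    set γ : ℝ → Fin (n+1) → ℝ := fun t i => Γ t i 0 with hγdef
    have hγs : ContDiff ℝ (⊤:ℕ∞) γ := contDiff_pi.2 fun i => hΓ i 0
    have P : ∀ k : ℕ, ∀ _hk : k ≤ n, ∀ t ∈ Set.Icc (0:ℝ) 1,
        (∀ i : Fin (n+1), k < (i:ℕ) → S16.vv Γ γ k t i = 0)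
          ∧ 0 < S16.vv Γ γ k t ⟨k, by omega⟩ := by
      intro k
      induction k with
      | zero =>
        intro _ t ht
        have hv : ∀ i : Fin (n+1),
            S16.vv Γ γ 0 t i = (1 : Matrix (Fin (n+1)) (Fin (n+1)) ℝ) i 0 := by
          intro i
          calc S16.vv Γ γ 0 t i = ((Γ t)ᵀ * Γ t) i 0 := by
                simp [S16.vv, iteratedDeriv_zero, Matrix.mul_apply, Matrix.transpose_apply,
                  hγdef]
          _ = _ := by rw [hO t ht]
        constructor
        · intro i hi
          have hne : i ≠ 0 := by
            intro h; subst h; simp at hi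
          rw [hv i, Matrix.one_apply_ne hne]
        · have h00 : (⟨0, by omega⟩ : Fin (n+1)) = 0 := by
            apply Fin.ext; simp
          rw [h00, hv 0, Matrix.one_apply_eq]
          norm_num
      | succ k IH =>
        intro hk t ht
        have IH' := IH (by omega)
        have hderiv0 : ∀ i : Fin (n+1), k < (i:ℕ) →
            deriv (fun u => S16.vv Γ γ k u i) t = 0 := fun i hi =>
          S16.deriv_eq_zero_of_constOn (c := 0)
            (((S16.contDiff_vv hΓ hγs k i).differentiable
              (by simp)).differentiableAt)
            ht (fun s hs => (IH' s hs).1 i hi)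
        constructor
        · intro i hi
          rw [S16.vv_succ hΓ hγs hO ht k i, hderiv0 i (by omega), zero_add]
          refine Finset.sum_eq_zero fun l _ => ?_
          rcases le_or_gt (l:ℕ) k with h | h
          · rw [(hg t ht).1 i l (by omega), zero_mul]
          · rw [(IH' t ht).1 l h, mul_zero]
        · have hkk : k + 1 < n + 1 := by omega
          have hkn : k < n + 1 := by omega
          have hik : ((⟨k+1, hkk⟩ : Fin (n+1)) : ℕ) = k+1 := rfl
          rw [S16.vv_succ hΓ hγs hO ht k (⟨k+1, hkk⟩ : Fin (n+1)), hderiv0 _ (by simp),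
            zero_add]
          have h3 : ∑ l, gMat Γ t (⟨k+1, hkk⟩ : Fin (n+1)) l * S16.vv Γ γ k t l
              = gMat Γ t (⟨k+1, hkk⟩ : Fin (n+1)) (⟨k, hkn⟩ : Fin (n+1))
                * S16.vv Γ γ k t (⟨k, hkn⟩ : Fin (n+1)) := by
            refine Finset.sum_eq_single_of_mem (⟨k, hkn⟩ : Fin (n+1)) (Finset.mem_univ _)
              fun l _ hlk => ?_
            have hlk' : (l:ℕ) ≠ k := fun h => hlk (Fin.ext h)
            rcases lt_or_gt_of_ne hlk' with h | h
            · rw [(hg t ht).1 _ l (by simp; omega), zero_mul]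
            · rw [(IH' t ht).1 l h, mul_zero]
          rw [h3]
          exact mul_pos ((hg t ht).2 _ _ (by simp)) (IH' t ht).2
    have hfr : ∀ t ∈ Set.Icc (0:ℝ) 1, IsFrameAt γ t (Γ t) := by
      intro t ht
      refine ⟨hO t ht, (hSO t ht).2, ?_⟩
      refine ⟨Matrix.of (fun i j => S16.vv Γ γ (j:ℕ) t i), ⟨?_, ?_⟩, ?_⟩
      · intro i j hji
        exact (P (j:ℕ) (by have := j.isLt; omega) t ht).1 i hji
      · intro i
        have := (P (i:ℕ) (by have := i.isLt; omega) t ht).2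
        simpa using this
      · ext i j
        rw [Matrix.mul_apply]
        calc Wmat γ t i j = iteratedDeriv (j:ℕ) (fun s => γ s i) t := by
              rw [show Wmat γ t i j = iteratedDeriv (j:ℕ) γ t i from rfl,
                congrFun (S16.iteratedDeriv_apply' hγs (j:ℕ) i) t]
        _ = ∑ l, Γ t i l * S16.vv Γ γ (j:ℕ) t l :=
              (S16.sum_mul_vv (mul_eq_one_comm.mp (hO t ht)) (j:ℕ) i).symm
        _ = ∑ l, Γ t i l * Matrix.of (fun i j => S16.vv Γ γ (j:ℕ) t i) l j := rfl
    have hplc : PosLocConv γ := by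
      intro t ht
      obtain ⟨ho, hdet, R, ⟨hRz, hRd⟩, hW⟩ := hfr t ht
      have hdetR : R.det = ∏ i, R i i :=
        Matrix.det_of_upperTriangular (fun i j hij => hRz i j hij)
      have hwr : Wronskian γ t = R.det := by
        rw [Wronskian, hW, Matrix.det_mul, hdet, one_mul]
      rw [hwr, hdetR]
      exact Finset.prod_pos fun i _ => hRd i
    refine ⟨γ, hγs, hplc, fun t ht => ?_, hfr⟩
    calc ∑ i, (γ t i)^2 = ∑ i, Γ t i 0 * Γ t i 0 :=
          Finset.sum_congr rfl fun i _ => by simp only [hγdef]; ring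
    _ = 1 := hnorm1 t ht
  · -- part 2 : gamma = Gamma e1
    intro γ hγs hplc hnorm hfr t ht
    obtain ⟨ho, hdet, R, ⟨hRz, hRd⟩, hW⟩ := hfr t ht
    have hcol : ∀ i, γ t i = Γ t i 0 * R 0 0 := by
      intro i
      have h1 : Wmat γ t i 0 = γ t i := by
        simp [Wmat, iteratedDeriv_zero]
      have h2 := congrFun (congrFun hW i) 0
      rw [h1] at h2
      rw [h2, Matrix.mul_apply]
      refine Finset.sum_eq_single_of_mem 0 (Finset.mem_univ 0) fun l _ hl => ?_
      rw [hRz l 0 (lt_of_le_of_ne (Fin.zero_le l) (Ne.symm hl)), mul_zero]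
    have hRone : R 0 0 = 1 := by
      have hs := hnorm t ht
      have h3 : ∑ i, (γ t i)^2 = R 0 0 ^ 2 * ∑ i, Γ t i 0 * Γ t i 0 := by
        rw [Finset.mul_sum]
        exact Finset.sum_congr rfl fun i _ => by rw [hcol i]; ring
      rw [hnorm1 t ht, mul_one, hs] at h3
      have hpos := hRd 0
      nlinarith
    funext i
    have he1 : (Γ t).mulVec e1 i = Γ t i 0 := by
      have : (e1 : Fin (n+1) → ℝ) = fun j => if j = 0 then (1:ℝ) else 0 := by
        funext j
        simp only [e1, Fin.ext_iff, Fin.val_zero]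
      rw [Matrix.mulVec, this]
      simp [dotProduct, mul_ite]
    rw [hcol i, hRone, mul_one, he1]
  · -- part 3 : skew symmetry
    intro _ t ht
    ext i j
    simp only [Matrix.transpose_apply, Matrix.neg_apply]
    have := S16.skew hΓ hO ht i j
    linarith
end
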